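/- For all integers n ≥ k ≥ 4, I_{C_k}(n) ≤ 2e · n^k/k^k. -/

import Mathlib

set_option linter.unusedSectionVars false
set_option maxHeartbeats 1000000

/-- The number of vertex subsets `S` of `G` such that the induced subgraph `G[S]` is
isomorphic to `H`. -/
noncomputable def inducedCount {V W : Type*} [Fintype V] (G : SimpleGraph V) (H : SimpleGraph W) : ℕ :=
  Set.ncard {S : Finset V | Nonempty (G.induce (S : Set V) ≃g H)}

/-- `I_H(n)`: the maximum of `D_H(G)` over all graphs `G` on `n` vertices. -/
noncomputable def maxInducedCount {W : Type*} (H : SimpleGraph W) (n : ℕ) : ℕ :=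
  ⨆ G : SimpleGraph (Fin n), inducedCount G H


open Finset
open scoped Fin.CommRing

/-- Weighted AM-GM for two terms, power form. -/
lemma amgm_gen (a b : ℕ) (p q : ℝ) (hp : 0 ≤ p) (hq : 0 ≤ q) :
    (p / a) ^ a * (q / b) ^ b ≤ ((p + q) / (a + b)) ^ (a + b) := by
  rcases Nat.eq_zero_or_pos a with ha | ha
  · subst ha
    simp only [pow_zero, one_mul, Nat.zero_add, Nat.cast_zero, zero_add]
    gcongr
    linarith
  rcases Nat.eq_zero_or_pos b with hb | hb
  · subst hb
    simp only [pow_zero, mul_one, Nat.add_zero, Nat.cast_zero, add_zero]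
    gcongr
    linarith
  have hA : (0:ℝ) < a := by exact_mod_cast ha
  have hB : (0:ℝ) < b := by exact_mod_cast hb
  have hs : (0:ℝ) < (a:ℝ) + b := by linarith
  have hw : (a:ℝ)/((a:ℝ)+b) + (b:ℝ)/((a:ℝ)+b) = 1 := by field_simp
  have h := Real.geom_mean_le_arith_mean2_weighted
    (by positivity : (0:ℝ) ≤ (a:ℝ)/((a:ℝ)+b)) (by positivity : (0:ℝ) ≤ (b:ℝ)/((a:ℝ)+b))
    (by positivity : (0:ℝ) ≤ p/a) (by positivity : (0:ℝ) ≤ q/b) hw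
  have hrhs : (a:ℝ)/((a:ℝ)+b) * (p/a) + (b:ℝ)/((a:ℝ)+b) * (q/b) = (p+q)/((a:ℝ)+b) := by
    field_simp
  rw [hrhs] at h
  have h2 := Real.rpow_le_rpow (by positivity) h (le_of_lt (by exact_mod_cast hs : (0:ℝ) < ((a+b:ℕ):ℝ)))
  have hcast : ((a+b:ℕ):ℝ) = (a:ℝ) + b := by push_cast; ring
  have e1 : (a:ℝ)/((a:ℝ)+b) * (((a+b:ℕ)):ℝ) = (a:ℝ) := by rw [hcast]; field_simp
  have e2 : (b:ℝ)/((a:ℝ)+b) * (((a+b:ℕ)):ℝ) = (b:ℝ) := by rw [hcast]; field_simp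
  rw [Real.mul_rpow (Real.rpow_nonneg (by positivity) _) (Real.rpow_nonneg (by positivity) _),
    ← Real.rpow_mul (by positivity), ← Real.rpow_mul (by positivity), e1, e2] at h2
  have e3 : (p/(a:ℝ)) ^ ((a:ℕ):ℝ) = (p/(a:ℝ)) ^ a := Real.rpow_natCast _ _
  have e4 : (q/(b:ℝ)) ^ ((b:ℕ):ℝ) = (q/(b:ℝ)) ^ b := Real.rpow_natCast _ _
  rw [e3, e4, Real.rpow_natCast] at h2
  exact h2

lemma amgm1 (j : ℕ) (c b : ℝ) (hc : 0 ≤ c) (hcb : c ≤ b) :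
    c * ((b - c)/j)^j ≤ (b/(j+1))^(j+1) := by
  have h := amgm_gen 1 j c (b - c) hc (by linarith)
  simp only [pow_one, Nat.cast_one] at h
  calc c * ((b-c)/j)^j = (c/1) * ((b-c)/j)^j := by norm_num
    _ ≤ ((c + (b-c))/(1+(j:ℝ)))^(1+j) := h
    _ = (b/((j:ℝ)+1))^(j+1) := by rw [add_comm 1 j]; ring_nf

lemma amgm2 (j : ℕ) (d x : ℝ) (hd : 0 ≤ d) (hx : 0 ≤ x) :
    d^2 * (x/j)^j ≤ 4 * ((d+x)/(j+2))^(j+2) := by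
  have h := amgm_gen 2 j d x hd hx
  have h4 : (0:ℝ) < 4 := by norm_num
  calc d^2 * (x/j)^j = 4 * ((d/2)^2 * (x/j)^j) := by ring
    _ ≤ 4 * ((d+x)/(2+(j:ℝ)))^(2+j) := by
        have := amgm_gen 2 j d x hd hx
        norm_num at this
        nlinarith [this]
    _ = 4 * ((d+x)/((j:ℝ)+2))^(j+2) := by rw [add_comm 2 j, add_comm 2 (j:ℝ)]

section ExtCount

variable {V : Type*} [Fintype V] [DecidableEq V] (G : SimpleGraph V) [DecidableRel G.Adj]

/-- closed neighborhood as a Finset -/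
def cnf (v : V) : Finset V := insert v (G.neighborFinset v)

/-- the finset of "induced path extension" sequences of length `j`, starting after
vertex `u`, avoiding the forbidden set `F`. -/
def ext : ℕ → V → Finset V → Finset (List V)
  | 0, _, _ => {[]}
  | (j+1), u, F => (G.neighborFinset u \ F).biUnion
      (fun w => (ext j w (F ∪ cnf G u)).image (fun t => w :: t))

lemma ext_card (j : ℕ) : ∀ (u : V) (F : Finset V),
    ((ext G j u F).card : ℝ) ≤ ((Fᶜ.card : ℝ)/j)^j := by
  induction j with
  | zero => intro u F; rw [show ext G 0 u F = {[]} from rfl]; simp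
  | succ j ih =>
    intro u F
    set S := G.neighborFinset u \ F with hS
    have hsub : S ⊆ Fᶜ := by
      intro x hx
      simp only [hS, Finset.mem_sdiff] at hx
      simpa [Finset.mem_compl] using hx.2
    have hcle : S.card ≤ Fᶜ.card := Finset.card_le_card hsub
    have hsub2 : (F ∪ cnf G u)ᶜ ⊆ Fᶜ \ S := by
      intro x hx
      simp only [Finset.mem_compl, Finset.mem_union, cnf, Finset.mem_insert] at hx
      push_neg at hx
      simp only [Finset.mem_sdiff, Finset.mem_compl, hS, Finset.mem_sdiff]
      refine ⟨hx.1, ?_⟩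
      intro hmem
      exact hx.2.2 hmem.1
    have hcard2 : ((F ∪ cnf G u)ᶜ.card : ℝ) ≤ (Fᶜ.card : ℝ) - S.card := by
      have := Finset.card_le_card hsub2
      have h2 : (Fᶜ \ S).card = Fᶜ.card - S.card := Finset.card_sdiff_of_subset hsub
      have h3 : (S.card : ℝ) ≤ Fᶜ.card := by exact_mod_cast hcle
      rw [h2] at this
      have : ((F ∪ cnf G u)ᶜ.card : ℕ) ≤ Fᶜ.card - S.card := this
      calc ((F ∪ cnf G u)ᶜ.card : ℝ) ≤ ((Fᶜ.card - S.card : ℕ) : ℝ) := by exact_mod_cast this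
        _ = (Fᶜ.card : ℝ) - S.card := by
            rw [Nat.cast_sub hcle]
    have h1 : (ext G (j+1) u F).card ≤ ∑ w ∈ S, ((ext G j w (F ∪ cnf G u)).image (fun t => w :: t)).card :=
      Finset.card_biUnion_le
    have h2 : ((ext G (j+1) u F).card : ℝ) ≤ (S.card : ℝ) * (((Fᶜ.card : ℝ) - S.card)/j)^j := by
      calc ((ext G (j+1) u F).card : ℝ)
          ≤ ∑ w ∈ S, (((ext G j w (F ∪ cnf G u)).image (fun t => w :: t)).card : ℝ) := by
            exact_mod_cast h1
        _ ≤ ∑ w ∈ S, (((Fᶜ.card : ℝ) - S.card)/j)^j := by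
            apply Finset.sum_le_sum
            intro w _
            calc (((ext G j w (F ∪ cnf G u)).image (fun t => w :: t)).card : ℝ)
                ≤ ((ext G j w (F ∪ cnf G u)).card : ℝ) := by exact_mod_cast Finset.card_image_le
              _ ≤ (((F ∪ cnf G u)ᶜ.card : ℝ)/j)^j := ih w (F ∪ cnf G u)
              _ ≤ (((Fᶜ.card : ℝ) - S.card)/j)^j := by
                  rcases Nat.eq_zero_or_pos j with hj | hj
                  · subst hj; simp
                  · have hjr : (0:ℝ) < j := by exact_mod_cast hj
                    exact pow_le_pow_left₀ (by positivity) ((div_le_div_iff_of_pos_right hjr).mpr hcard2) j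
        _ = (S.card : ℝ) * (((Fᶜ.card : ℝ) - S.card)/j)^j := by
            rw [Finset.sum_const, nsmul_eq_mul]
    calc ((ext G (j+1) u F).card : ℝ) ≤ (S.card : ℝ) * (((Fᶜ.card : ℝ) - S.card)/j)^j := h2
      _ ≤ ((Fᶜ.card : ℝ)/(j+1))^(j+1) := by
          have := amgm1 j (S.card : ℝ) (Fᶜ.card : ℝ) (by positivity) (by exact_mod_cast hcle)
          exact this
      _ = ((Fᶜ.card : ℝ)/((j+1 : ℕ):ℝ))^(j+1) := by norm_cast

end ExtCount

section Cycle

open Finset SimpleGraph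

variable {V : Type*} [Fintype V] [DecidableEq V] (G : SimpleGraph V) [DecidableRel G.Adj] (m : ℕ)

/-- dihedral permutations of `Fin (m+4)` -/
def dih (c : Fin (m+4)) (r : Bool) : Fin (m+4) ≃ Fin (m+4) :=
  if r then Equiv.addLeft c else Equiv.subLeft c

lemma dih_adj (c : Fin (m+4)) (r : Bool) (x y : Fin (m+4)) :
    (cycleGraph (m+4)).Adj (dih m c r x) (dih m c r y) ↔ (cycleGraph (m+4)).Adj x y := by
  have h : ∀ u v : Fin (m+2+2), (cycleGraph (m+2+2)).Adj u v ↔ u - v = 1 ∨ v - u = 1 :=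
    fun u v => cycleGraph_adj
  cases r
  · simp only [dih, if_false, Bool.false_eq_true, Equiv.subLeft_apply]
    rw [h, h]
    have e1 : c - x - (c - y) = y - x := by ring
    have e2 : c - y - (c - x) = x - y := by ring
    rw [e1, e2, or_comm]
  · simp only [dih, if_true, Equiv.coe_addLeft]
    rw [h, h]
    have e1 : c + x - (c + y) = x - y := by ring
    have e2 : c + y - (c + x) = y - x := by ring
    rw [e1, e2]

variable {S : Finset V} (φ : G.induce (S : Set V) ≃g cycleGraph (m+4))

/-- enumeration of the vertices of an induced cycle -/
def psi (c : Fin (m+4)) (r : Bool) (a : ℕ) : V :=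
  ((φ.symm (dih m c r (a : Fin (m+4)))) : V)

lemma psi_adj (c : Fin (m+4)) (r : Bool) (a b : ℕ) :
    G.Adj (psi G m φ c r a) (psi G m φ c r b) ↔
      (cycleGraph (m+4)).Adj (a : Fin (m+4)) (b : Fin (m+4)) := by
  rw [psi, psi, ← dih_adj m c r]
  exact φ.symm.map_adj_iff

lemma psi_inj (c : Fin (m+4)) (r : Bool) {a b : ℕ} :
    psi G m φ c r a = psi G m φ c r b ↔ (a : Fin (m+4)) = (b : Fin (m+4)) := by
  constructor
  · intro h
    have h2 : φ.symm (dih m c r a) = φ.symm (dih m c r b) := Subtype.ext h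
    exact (dih m c r).injective (φ.symm.injective h2)
  · intro h; rw [psi, psi, h]

end Cycle

section FinArith

open SimpleGraph

lemma fin_cast_sub (m a b : ℕ) (hba : b ≤ a) :
    ((a : Fin (m+4)) - (b : Fin (m+4))) = ((a - b : ℕ) : Fin (m+4)) :=
  (Nat.cast_sub hba).symm

lemma fin_neg_cast (m x : ℕ) (hx : x ≤ m+4) :
    -((x : ℕ) : Fin (m+4)) = ((m+4-x : ℕ) : Fin (m+4)) := by
  have h : ((m+4-x : ℕ) : Fin (m+4)) + ((x:ℕ) : Fin (m+4)) = (((m+4 : ℕ)) : Fin (m+4)) := by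
    rw [← Nat.cast_add]; congr 1; omega
  rw [Fin.natCast_self] at h
  exact neg_eq_of_add_eq_zero_left h

lemma fin_cast_eq_one_iff (m x : ℕ) (hx : x < m+4) :
    ((x : ℕ) : Fin (m+4)) = 1 ↔ x = 1 := by
  rw [Fin.ext_iff, Fin.val_cast_of_lt hx, Fin.val_one]

lemma fin_cast_inj (m a b : ℕ) (ha : a < m+4) (hb : b < m+4) :
    ((a : ℕ) : Fin (m+4)) = ((b : ℕ) : Fin (m+4)) ↔ a = b := by
  rw [Fin.ext_iff, Fin.val_cast_of_lt ha, Fin.val_cast_of_lt hb]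

lemma cyc_adj_cast (m a b : ℕ) :
    (cycleGraph (m+4)).Adj ((a:ℕ) : Fin (m+4)) ((b:ℕ) : Fin (m+4)) ↔
      ((a:Fin (m+4)) - b = 1 ∨ (b:Fin (m+4)) - a = 1) :=
  cycleGraph_adj (n := m+2)

lemma cyc_nonadj (m a b : ℕ) (h2 : b + 2 ≤ a) (ha : a ≤ m+2) :
    ¬ (cycleGraph (m+4)).Adj ((b:ℕ) : Fin (m+4)) ((a:ℕ) : Fin (m+4)) ∧
      ((b:ℕ) : Fin (m+4)) ≠ ((a:ℕ) : Fin (m+4)) := by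
  have hba : b ≤ a := by omega
  constructor
  · intro h
    rw [cyc_adj_cast] at h
    rcases h with h1 | h1
    · have e : (b : Fin (m+4)) - a = -((a : Fin (m+4)) - b) := by ring
      rw [e, fin_cast_sub m a b hba, fin_neg_cast m (a-b) (by omega),
        fin_cast_eq_one_iff m _ (by omega)] at h1
      omega
    · rw [fin_cast_sub m a b hba, fin_cast_eq_one_iff m _ (by omega)] at h1
      omega
  · rw [Ne, fin_cast_inj m b a (by omega) (by omega)]
    omega

lemma cyc_adj_succ (m b : ℕ) :
    (cycleGraph (m+4)).Adj ((b : ℕ) : Fin (m+4)) (((b+1 : ℕ)) : Fin (m+4)) := by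
  rw [cyc_adj_cast]
  right
  rw [Nat.cast_add, Nat.cast_one]
  ring

lemma cyc_adj_last (m : ℕ) :
    (cycleGraph (m+4)).Adj ((0 : ℕ) : Fin (m+4)) (((m+3 : ℕ)) : Fin (m+4)) := by
  rw [cyc_adj_cast]
  left
  have e : ((0:ℕ) : Fin (m+4)) - ((m+3 : ℕ) : Fin (m+4)) = -((m+3:ℕ) : Fin (m+4)) := by
    rw [Nat.cast_zero]; ring
  rw [e, fin_neg_cast m (m+3) (by omega), show m+4-(m+3) = 1 from by omega, Nat.cast_one]

end FinArith

section CL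

open Finset SimpleGraph

variable {V : Type*} [Fintype V] [DecidableEq V] (G : SimpleGraph V) [DecidableRel G.Adj] (m : ℕ)

lemma ext_zero (u : V) (F : Finset V) : ext G 0 u F = {[]} := rfl

lemma ext_succ (j : ℕ) (u : V) (F : Finset V) :
    ext G (j+1) u F = (G.neighborFinset u \ F).biUnion
      (fun w => (ext G j w (F ∪ cnf G u)).image (fun t => w :: t)) := rfl

variable {S : Finset V} (φ : G.induce (S : Set V) ≃g cycleGraph (m+4))

lemma cl (c : Fin (m+4)) (r : Bool) :
    ∀ (mm a : ℕ) (F : Finset V), 1 ≤ a → a + mm ≤ m+3 →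
    F ⊆ (Finset.range (a-1)).biUnion (fun b => cnf G (psi G m φ c r b)) →
    ((List.range mm).map (fun i => psi G m φ c r (a + i))) ∈ ext G mm (psi G m φ c r (a-1)) F := by
  intro mm
  induction mm with
  | zero => intro a F _ _ _; rw [ext_zero]; simp
  | succ mm ih =>
    intro a F ha hsum hF
    rw [ext_succ, List.range_succ_eq_map, List.map_cons, List.map_map]
    apply Finset.mem_biUnion.mpr
    refine ⟨psi G m φ c r a, ?_, ?_⟩
    · rw [Finset.mem_sdiff]
      constructor
      · rw [SimpleGraph.mem_neighborFinset, psi_adj]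
        have h := cyc_adj_succ m (a-1)
        rwa [show a-1+1 = a from by omega] at h
      · intro hmem
        obtain hb := hF hmem
        rw [Finset.mem_biUnion] at hb
        obtain ⟨b, hbr, hbc⟩ := hb
        rw [Finset.mem_range] at hbr
        rw [cnf, Finset.mem_insert] at hbc
        rcases hbc with heq | hadj
        · rw [psi_inj, fin_cast_inj m _ _ (by omega) (by omega)] at heq
          omega
        · rw [SimpleGraph.mem_neighborFinset, psi_adj] at hadj
          exact (cyc_nonadj m a b (by omega) (by omega)).1 hadj
    · have e : (List.range mm).map ((fun i => psi G m φ c r (a + i)) ∘ Nat.succ)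
          = (List.range mm).map (fun i => psi G m φ c r ((a+1) + i)) := by
        apply List.map_congr_left
        intro i hi
        show psi G m φ c r (a + Nat.succ i) = _
        have e2 : a + Nat.succ i = a + 1 + i := by omega
        rw [e2]
      rw [e]
      have happ : (List.range mm).map (fun i => psi G m φ c r ((a+1) + i))
          ∈ ext G mm (psi G m φ c r a) (F ∪ cnf G (psi G m φ c r (a-1))) := by
        have happ0 := ih (a+1) (F ∪ cnf G (psi G m φ c r (a-1))) (by omega) (by omega) ?_
        · rwa [show a+1-1 = a from by omega] at happ0
        · apply Finset.union_subset
          · apply hF.trans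
            apply Finset.biUnion_subset_biUnion_of_subset_left
            intro x hx
            rw [Finset.mem_range] at *
            omega
          · have hmm : a - 1 ∈ Finset.range (a+1-1) := by rw [Finset.mem_range]; omega
            exact Finset.subset_biUnion_of_mem (fun b => cnf G (psi G m φ c r b)) hmm
      exact Finset.mem_image_of_mem _ happ

section BigW

open Finset SimpleGraph

variable {V : Type*} [Fintype V] [DecidableEq V] (G : SimpleGraph V) [DecidableRel G.Adj] (m : ℕ)

/-- the master counting set -/
def bigW : Finset (List V) :=
  Finset.univ.biUnion (fun v1 => (G.neighborFinset v1).biUnion (fun v2 =>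
    (ext G (m+1) v2 (cnf G v1)).biUnion (fun t =>
      (G.neighborFinset v1).image (fun w => v1 :: v2 :: (t ++ [w])))))

variable {S : Finset V} (φ : G.induce (S : Set V) ≃g cycleGraph (m+4))

def buildList (c : Fin (m+4)) (r : Bool) : List V :=
  (List.range (m+4)).map (psi G m φ c r)

lemma buildList_eq (c : Fin (m+4)) (r : Bool) :
    buildList G m φ c r = psi G m φ c r 0 :: psi G m φ c r 1 ::
      (((List.range (m+1)).map (fun i => psi G m φ c r (2+i))) ++ [psi G m φ c r (m+3)]) := by
  unfold buildList
  rw [show m+4 = (m+3)+1 from rfl, List.range_succ, List.map_append, List.map_singleton,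
    List.range_succ_eq_map, List.range_succ_eq_map, List.map_cons, List.map_map,
    List.map_cons, List.map_map]
  have e : List.map ((psi G m φ c r ∘ Nat.succ) ∘ Nat.succ) (List.range (m+1))
      = List.map (fun i => psi G m φ c r (2+i)) (List.range (m+1)) := by
    apply List.map_congr_left
    intro i hi
    show psi G m φ c r (Nat.succ (Nat.succ i)) = psi G m φ c r (2+i)
    congr 1
    omega
  rw [e]
  rfl

lemma buildList_mem_bigW (c : Fin (m+4)) (r : Bool) : buildList G m φ c r ∈ bigW G m := by
  rw [buildList_eq]
  apply Finset.mem_biUnion.mpr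
  refine ⟨psi G m φ c r 0, Finset.mem_univ _, ?_⟩
  apply Finset.mem_biUnion.mpr
  refine ⟨psi G m φ c r 1, ?_, ?_⟩
  · rw [SimpleGraph.mem_neighborFinset, psi_adj]
    exact cyc_adj_succ m 0
  apply Finset.mem_biUnion.mpr
  refine ⟨(List.range (m+1)).map (fun i => psi G m φ c r (2+i)), ?_, ?_⟩
  · have h := cl G m φ c r (m+1) 2 (cnf G (psi G m φ c r 0)) (by omega) (by omega) ?_
    · exact h
    · intro x hx
      apply Finset.mem_biUnion.mpr
      exact ⟨0, by simp, hx⟩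
  · apply Finset.mem_image.mpr
    refine ⟨psi G m φ c r (m+3), ?_, rfl⟩
    rw [SimpleGraph.mem_neighborFinset, psi_adj]
    exact cyc_adj_last m

lemma dih_zero (c : Fin (m+4)) (r : Bool) : dih m c r 0 = c := by
  cases r <;> simp [dih]

lemma dih_one_ne (c : Fin (m+4)) (h : dih m c true 1 = dih m c false 1) : False := by
  simp only [dih, if_true, if_false, Bool.false_eq_true, Equiv.coe_addLeft,
    Equiv.subLeft_apply] at h
  have h2 : (2 : Fin (m+4)) = 0 := by linear_combination h
  have h3 : ((2 : Fin (m+4)) : ℕ) = 2 := Fin.val_two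
  rw [h2] at h3
  simp at h3

lemma mem_S_iff (c : Fin (m+4)) (r : Bool) (s : V) :
    s ∈ S ↔ ∃ i, i < m+4 ∧ psi G m φ c r i = s := by
  constructor
  · intro hs
    refine ⟨((dih m c r).symm (φ ⟨s, by simpa using hs⟩)).val,
      ((dih m c r).symm (φ ⟨s, by simpa using hs⟩)).isLt, ?_⟩
    rw [psi, Fin.cast_val_eq_self, Equiv.apply_symm_apply]
    rw [RelIso.symm_apply_apply]
  · rintro ⟨i, hi, hpsi⟩
    rw [← hpsi, psi]
    simpa using (φ.symm (dih m c r (i : Fin (m+4)))).2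

end BigW

section Inj

open Finset SimpleGraph

variable {V : Type*} [Fintype V] [DecidableEq V] (G : SimpleGraph V) [DecidableRel G.Adj] (m : ℕ)

lemma psi_eq_of_buildList_eq {S S' : Finset V} (φ : G.induce (S : Set V) ≃g cycleGraph (m+4))
    (φ' : G.induce (S' : Set V) ≃g cycleGraph (m+4)) (c c' : Fin (m+4)) (r r' : Bool)
    (h : buildList G m φ c r = buildList G m φ' c' r') :
    ∀ i, i < m+4 → psi G m φ c r i = psi G m φ' c' r' i := by
  intro i hi
  have h2 := congrArg (fun l : List V => l[i]?) h
  simp only [buildList, List.getElem?_map, List.getElem?_range hi, Option.map_some] at h2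
  exact Option.some_injective _ h2

lemma param_eq {S : Finset V} (φ : G.induce (S : Set V) ≃g cycleGraph (m+4))
    (c c' : Fin (m+4)) (r r' : Bool)
    (h : ∀ i, i < m+4 → psi G m φ c r i = psi G m φ c' r' i) : c = c' ∧ r = r' := by
  have hd : ∀ x : Fin (m+4), dih m c r x = dih m c' r' x := by
    intro x
    have hx := h x.val x.isLt
    rw [psi, psi, Fin.cast_val_eq_self] at hx
    exact φ.symm.injective (Subtype.ext hx)
  have hc : c = c' := by
    have h0 := hd 0
    rwa [dih_zero, dih_zero] at h0
  subst hc
  refine ⟨rfl, ?_⟩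
  cases r <;> cases r'
  · rfl
  · exact absurd ((hd 1).symm) (fun hcon => dih_one_ne m c hcon)
  · exact absurd (hd 1) (fun hcon => dih_one_ne m c hcon)
  · rfl

lemma card_A_le :
    2 * (m+4) * (@Finset.filter (Finset V)
      (fun S => Nonempty (G.induce (S : Set V) ≃g cycleGraph (m+4)))
      (Classical.decPred _) Finset.univ).card ≤ (bigW G m).card := by
  classical
  set A := (@Finset.filter (Finset V)
      (fun S => Nonempty (G.induce (S : Set V) ≃g cycleGraph (m+4)))
      (Classical.decPred _) Finset.univ) with hA
  set f : Finset V × (Fin (m+4) × Bool) → List V := fun p =>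
    if h : Nonempty (G.induce (p.1 : Set V) ≃g cycleGraph (m+4))
    then buildList G m h.some p.2.1 p.2.2 else [] with hf
  have key : (A ×ˢ (Finset.univ : Finset (Fin (m+4) × Bool))).card ≤ (bigW G m).card := by
    apply Finset.card_le_card_of_injOn f
    · intro p hp
      have hp1 : Nonempty (G.induce ((p.1 : Finset V) : Set V) ≃g cycleGraph (m+4)) := by
        have := (Finset.mem_product.mp hp).1
        rw [hA, Finset.mem_filter] at this
        exact this.2
      simp only [hf, dif_pos hp1]
      exact buildList_mem_bigW G m hp1.some p.2.1 p.2.2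
    · rintro ⟨S1, c1, r1⟩ hp ⟨S2, c2, r2⟩ hq heq
      have hp1 : Nonempty (G.induce ((S1 : Finset V) : Set V) ≃g cycleGraph (m+4)) := by
        have := (Finset.mem_product.mp hp).1
        rw [hA, Finset.mem_filter] at this
        exact this.2
      have hq1 : Nonempty (G.induce ((S2 : Finset V) : Set V) ≃g cycleGraph (m+4)) := by
        have := (Finset.mem_product.mp hq).1
        rw [hA, Finset.mem_filter] at this
        exact this.2
      simp only [hf, dif_pos hp1, dif_pos hq1] at heq
      have hpt := psi_eq_of_buildList_eq G m hp1.some hq1.some c1 c2 r1 r2 heq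
      have hSS : S1 = S2 := by
        apply Finset.ext
        intro s
        rw [mem_S_iff G m hp1.some c1 r1 s, mem_S_iff G m hq1.some c2 r2 s]
        constructor
        · rintro ⟨i, hi, he⟩
          exact ⟨i, hi, (hpt i hi) ▸ he⟩
        · rintro ⟨i, hi, he⟩
          exact ⟨i, hi, (hpt i hi).symm ▸ he⟩
      subst hSS
      have hpar := param_eq G m hp1.some c1 c2 r1 r2 hpt
      rw [hpar.1, hpar.2]
  rw [Finset.card_product] at key
  calc 2 * (m+4) * A.card = A.card * ((m+4) * 2) := by ring
    _ = A.card * (Finset.univ : Finset (Fin (m+4) × Bool)).card := by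
        rw [Finset.card_univ]
        simp
    _ ≤ (bigW G m).card := key

end Inj

section Count

open Finset SimpleGraph

variable {V : Type*} [Fintype V] [DecidableEq V] (G : SimpleGraph V) [DecidableRel G.Adj] (m : ℕ)

lemma bigW_card_le :
    ((bigW G m).card : ℝ) ≤ (Fintype.card V : ℝ) *
      (4 * (((Fintype.card V : ℝ) - 1)/(m+3))^(m+3)) := by
  have hv : ∀ v1 : V, (((G.neighborFinset v1).biUnion (fun v2 =>
      (ext G (m+1) v2 (cnf G v1)).biUnion (fun t =>
      (G.neighborFinset v1).image (fun w => v1 :: v2 :: (t ++ [w]))))).card : ℝ)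
      ≤ 4 * (((Fintype.card V : ℝ) - 1)/(m+3))^(m+3) := by
    intro v1
    set n := Fintype.card V with hn
    set d := (G.neighborFinset v1).card with hd
    have hcnf : (cnf G v1).card = d + 1 := by
      rw [cnf, Finset.card_insert_of_notMem (G.notMem_neighborFinset_self v1)]
    have hdn : d + 1 ≤ n := by
      rw [← hcnf]; exact Finset.card_le_univ _
    have hcompl : (((cnf G v1)ᶜ).card : ℝ) = (n:ℝ) - 1 - d := by
      rw [Finset.card_compl, hcnf, Nat.cast_sub hdn]
      push_cast
      ring
    have hx : (0:ℝ) ≤ (n:ℝ) - 1 - d := by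
      have : ((d:ℝ) + 1) ≤ n := by exact_mod_cast hdn
      linarith
    have h2 : ∀ v2 : V, (((ext G (m+1) v2 (cnf G v1)).biUnion fun t =>
        (G.neighborFinset v1).image (fun w => v1 :: v2 :: (t ++ [w]))).card : ℝ)
        ≤ ((((n:ℝ)-1-d))/(m+1))^(m+1) * d := by
      intro v2
      have hb : ((ext G (m+1) v2 (cnf G v1)).biUnion fun t =>
          (G.neighborFinset v1).image (fun w => v1 :: v2 :: (t ++ [w]))).card
          ≤ (ext G (m+1) v2 (cnf G v1)).card * d := by
        calc ((ext G (m+1) v2 (cnf G v1)).biUnion fun t =>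
            (G.neighborFinset v1).image (fun w => v1 :: v2 :: (t ++ [w]))).card
            ≤ ∑ t ∈ ext G (m+1) v2 (cnf G v1),
              ((G.neighborFinset v1).image (fun w => v1 :: v2 :: (t ++ [w]))).card :=
              Finset.card_biUnion_le
          _ ≤ ∑ _t ∈ ext G (m+1) v2 (cnf G v1), d :=
              Finset.sum_le_sum (fun t _ => Finset.card_image_le)
          _ = (ext G (m+1) v2 (cnf G v1)).card * d := by
              rw [Finset.sum_const, smul_eq_mul]
      have hext : ((ext G (m+1) v2 (cnf G v1)).card : ℝ) ≤ ((((n:ℝ)-1-d))/(m+1))^(m+1) := by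
        have h := ext_card G (m+1) v2 (cnf G v1)
        rw [hcompl] at h
        convert h using 3
        push_cast
        ring
      calc (((ext G (m+1) v2 (cnf G v1)).biUnion fun t =>
          (G.neighborFinset v1).image (fun w => v1 :: v2 :: (t ++ [w]))).card : ℝ)
          ≤ ((ext G (m+1) v2 (cnf G v1)).card : ℝ) * d := by exact_mod_cast hb
        _ ≤ ((((n:ℝ)-1-d))/(m+1))^(m+1) * d := by
            apply mul_le_mul_of_nonneg_right hext (by positivity)
    calc (((G.neighborFinset v1).biUnion (fun v2 =>
        (ext G (m+1) v2 (cnf G v1)).biUnion (fun t =>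
        (G.neighborFinset v1).image (fun w => v1 :: v2 :: (t ++ [w]))))).card : ℝ)
        ≤ ∑ v2 ∈ G.neighborFinset v1, (((ext G (m+1) v2 (cnf G v1)).biUnion fun t =>
            (G.neighborFinset v1).image (fun w => v1 :: v2 :: (t ++ [w]))).card : ℝ) := by
          exact_mod_cast Finset.card_biUnion_le
      _ ≤ ∑ _v2 ∈ G.neighborFinset v1, ((((n:ℝ)-1-d))/(m+1))^(m+1) * d :=
          Finset.sum_le_sum (fun v2 _ => h2 v2)
      _ = (d:ℝ)^2 * ((((n:ℝ)-1-d))/(m+1))^(m+1) := by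
          rw [Finset.sum_const, nsmul_eq_mul, ← hd]
          ring
      _ ≤ 4 * ((((d:ℝ) + ((n:ℝ)-1-d)))/((m+1)+2))^((m+1)+2) := by
          have h := amgm2 (m+1) (d:ℝ) ((n:ℝ)-1-d) (by positivity) hx
          push_cast at h
          exact h
      _ = 4 * (((n:ℝ) - 1)/(m+3))^(m+3) := by
          norm_num
          ring_nf
  calc ((bigW G m).card : ℝ)
      ≤ ∑ v1 ∈ Finset.univ, (((G.neighborFinset v1).biUnion (fun v2 =>
        (ext G (m+1) v2 (cnf G v1)).biUnion (fun t =>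
        (G.neighborFinset v1).image (fun w => v1 :: v2 :: (t ++ [w]))))).card : ℝ) := by
        exact_mod_cast Finset.card_biUnion_le
    _ ≤ ∑ _v1 ∈ Finset.univ, 4 * (((Fintype.card V : ℝ) - 1)/(m+3))^(m+3) :=
        Finset.sum_le_sum (fun v1 _ => hv v1)
    _ = (Fintype.card V : ℝ) * (4 * (((Fintype.card V : ℝ) - 1)/(m+3))^(m+3)) := by
        rw [Finset.sum_const, nsmul_eq_mul, Finset.card_univ]

end Count

lemma exp_key (m : ℕ) : ((m:ℝ)+4)^(m+3) ≤ Real.exp 1 * ((m:ℝ)+3)^(m+3) := by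
  have h0 : ((m:ℝ)+4) = (1 + 1/((m:ℝ)+3)) * ((m:ℝ)+3) := by field_simp; ring
  rw [h0, mul_pow]
  have h1 : (1 + 1/((m:ℝ)+3))^(m+3) ≤ Real.exp 1 := by
    have h2 := Real.add_one_le_exp (1/((m:ℝ)+3))
    calc (1 + 1/((m:ℝ)+3))^(m+3) ≤ (Real.exp (1/((m:ℝ)+3)))^(m+3) := by
          apply pow_le_pow_left₀ (by positivity) (by linarith)
      _ = Real.exp (((m+3:ℕ):ℝ) * (1/((m:ℝ)+3))) := by rw [Real.exp_nat_mul]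
      _ = Real.exp 1 := by
          congr 1
          push_cast
          field_simp
  exact mul_le_mul_of_nonneg_right h1 (by positivity)

/-- For all integers `n ≥ k ≥ 4`, `I_{C_k}(n) ≤ 2e·n^k/k^k`. -/
theorem maxInducedCount_cycle_le (n k : ℕ) (hk : 4 ≤ k) (hkn : k ≤ n) :
    (maxInducedCount (SimpleGraph.cycleGraph k) n : ℝ) ≤
      2 * Real.exp 1 * (n : ℝ) ^ k / (k : ℝ) ^ k := by
  obtain ⟨m, rfl⟩ : ∃ m, k = m + 4 := ⟨k - 4, by omega⟩
  classical
  set g : SimpleGraph (Fin n) → ℕ := fun G => inducedCount G (SimpleGraph.cycleGraph (m+4)) with hg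
  have hbdd : ∀ G, g G ≤ 2^n := by
    intro G
    rw [hg]
    calc inducedCount G (SimpleGraph.cycleGraph (m+4))
        ≤ (Set.univ : Set (Finset (Fin n))).ncard :=
          Set.ncard_le_ncard (Set.subset_univ _) Set.finite_univ
      _ = 2^n := by
          rw [Set.ncard_univ, Nat.card_eq_fintype_card, Fintype.card_finset, Fintype.card_fin]
  have hmem : maxInducedCount (SimpleGraph.cycleGraph (m+4)) n ∈ Set.range g := by
    have hrfl : maxInducedCount (SimpleGraph.cycleGraph (m+4)) n = sSup (Set.range g) := rfl
    rw [hrfl]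
    apply Nat.sSup_mem ⟨g ⊥, Set.mem_range_self ⊥⟩
    exact ⟨2^n, fun x hx => by obtain ⟨G, hG⟩ := hx; exact hG ▸ hbdd G⟩
  obtain ⟨G, hG⟩ := hmem
  rw [← hG]
  letI : DecidableRel G.Adj := Classical.decRel _
  set A := (@Finset.filter (Finset (Fin n))
      (fun S => Nonempty (G.induce (S : Set (Fin n)) ≃g SimpleGraph.cycleGraph (m+4)))
      (Classical.decPred _) Finset.univ) with hA
  have hcount : g G = A.card := by
    rw [show g G = Set.ncard {S : Finset (Fin n) |
      Nonempty (G.induce (S : Set (Fin n)) ≃g SimpleGraph.cycleGraph (m+4))} from rfl]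
    have hset : {S : Finset (Fin n) |
        Nonempty (G.induce (S : Set (Fin n)) ≃g SimpleGraph.cycleGraph (m+4))} = ↑A := by
      ext S
      simp [hA]
    rw [hset, Set.ncard_coe_finset]

  rw [hcount]
  have h1 : (2 * ((m:ℝ)+4) * A.card : ℝ) ≤ ((bigW G m).card : ℝ) := by
    have := card_A_le G m
    calc (2 * ((m:ℝ)+4) * A.card : ℝ) = ((2 * (m+4) * A.card : ℕ) : ℝ) := by push_cast; ring
      _ ≤ ((bigW G m).card : ℝ) := by exact_mod_cast this
  have h2 := bigW_card_le G m
  rw [Fintype.card_fin] at h2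
  have hn4 : (4:ℝ) ≤ (n:ℝ) := by
    have : 4 ≤ n := by omega
    exact_mod_cast this
  set P := ((m:ℝ)+3)^(m+3) with hP
  set Q := ((m:ℝ)+4)^(m+3) with hQ
  have hPpos : 0 < P := by positivity
  have hQpos : 0 < Q := by positivity
  have hNn : (0:ℝ) ≤ (n:ℝ)^(m+3) := by positivity
  have hexp := exp_key m
  have he : (0:ℝ) < Real.exp 1 := Real.exp_pos 1
  -- combine h1, h2
  have hstep : 2 * ((m:ℝ)+4) * A.card ≤ (n:ℝ) * (4 * (((n:ℝ) - 1)/(m+3))^(m+3)) :=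
    le_trans h1 h2
  have hmono : (((n:ℝ) - 1)/(m+3))^(m+3) ≤ ((n:ℝ)/(m+3))^(m+3) := by
    apply pow_le_pow_left₀ (div_nonneg (by linarith) (by positivity))
    exact (div_le_div_iff_of_pos_right (by positivity)).mpr (by linarith)
  have hstep2 : 2 * ((m:ℝ)+4) * A.card ≤ (n:ℝ) * (4 * ((n:ℝ)^(m+3)/P)) := by
    calc 2 * ((m:ℝ)+4) * A.card ≤ (n:ℝ) * (4 * (((n:ℝ) - 1)/(m+3))^(m+3)) := hstep
      _ ≤ (n:ℝ) * (4 * (((n:ℝ))/(m+3))^(m+3)) := by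
          apply mul_le_mul_of_nonneg_left (by nlinarith [hmono]) (by positivity)
      _ = (n:ℝ) * (4 * ((n:ℝ)^(m+3)/P)) := by rw [div_pow, hP]
  -- final algebra
  have hpow1 : (n:ℝ)^(m+4) = (n:ℝ)^(m+3) * n := pow_succ _ _
  have hpow2 : ((m:ℝ)+4)^(m+4) = Q * ((m:ℝ)+4) := pow_succ _ _
  have hstep3 : 2*((m:ℝ)+4)*(A.card:ℝ) * P ≤ 4 * (n:ℝ)^(m+4) := by
    have hmul := mul_le_mul_of_nonneg_right hstep2 (le_of_lt hPpos)
    calc 2*((m:ℝ)+4)*(A.card:ℝ) * P ≤ (n:ℝ) * (4 * ((n:ℝ)^(m+3)/P)) * P := hmul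
      _ = 4 * ((n:ℝ)^(m+3) * n) := by field_simp
      _ = 4 * (n:ℝ)^(m+4) := by rw [hpow1]
  have hgoal : (A.card : ℝ) ≤ 2 * Real.exp 1 * (n:ℝ)^(m+4) / ((m:ℝ)+4)^(m+4) := by
    rw [le_div_iff₀ (by positivity), hpow2]
    have t1 : (A.card:ℝ) * (Q * ((m:ℝ)+4)) ≤ (A.card:ℝ) * ((Real.exp 1 * P) * ((m:ℝ)+4)) := by
      apply mul_le_mul_of_nonneg_left ?_ (by positivity)
      exact mul_le_mul_of_nonneg_right hexp (by positivity)
    have t3 : (A.card:ℝ) * P * ((m:ℝ)+4) ≤ 2 * (n:ℝ)^(m+4) := by linarith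
    calc (A.card:ℝ) * (Q * ((m:ℝ)+4)) ≤ (A.card:ℝ) * ((Real.exp 1 * P) * ((m:ℝ)+4)) := t1
      _ = Real.exp 1 * ((A.card:ℝ) * P * ((m:ℝ)+4)) := by ring
      _ ≤ Real.exp 1 * (2 * (n:ℝ)^(m+4)) := mul_le_mul_of_nonneg_left t3 he.le
      _ = 2 * Real.exp 1 * (n:ℝ)^(m+4) := by ring
  calc (A.card : ℝ) ≤ 2 * Real.exp 1 * (n:ℝ)^(m+4) / ((m:ℝ)+4)^(m+4) := hgoal
    _ = 2 * Real.exp 1 * (n:ℝ)^(m+4) / (((m+4:ℕ)):ℝ)^(m+4) := by norm_num
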